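/- Let d ≥ 1, let ρ > 0 and γ > 0 satisfy γρ < 1, and let g : ℝ^d → ℝ be ρ-weakly convex. Then the Moreau envelope g^γ is ρ/(1 − γρ)-weakly convex, i.e., x ↦ g^γ(x) + (ρ/(2(1 − γρ)))‖x‖² is convex. -/

import Mathlib

open scoped RealInnerProductSpace

section Aux

variable {E : Type*} [NormedAddCommGroup E] [InnerProductSpace ℝ E]

private lemma norm_sq_combo_le (a b : ℝ) (ha : 0 ≤ a) (hb : 0 ≤ b) (hab : a + b = 1)
    (v w : E) : ‖a • v + b • w‖ ^ 2 ≤ a * ‖v‖ ^ 2 + b * ‖w‖ ^ 2 := by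
  have h1 : ⟪v, w⟫ ≤ ‖v‖ * ‖w‖ := real_inner_le_norm v w
  have h2 : ‖a • v + b • w‖ ^ 2
      = a ^ 2 * ‖v‖ ^ 2 + 2 * (a * b) * ⟪v, w⟫ + b ^ 2 * ‖w‖ ^ 2 := by
    rw [@norm_add_sq_real, norm_smul, norm_smul, real_inner_smul_left, real_inner_smul_right]
    simp only [Real.norm_eq_abs, abs_of_nonneg ha, abs_of_nonneg hb, mul_pow]
    ring
  nlinarith [mul_nonneg (mul_nonneg ha hb) (sq_nonneg (‖v‖ - ‖w‖)), mul_nonneg ha hb,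
    norm_nonneg v, norm_nonneg w]

private lemma iInf_sub_const {α : Type*} [Nonempty α] (F : α → ℝ)
    (hb : BddBelow (Set.range F)) (C : ℝ) :
    (⨅ y, (F y - C)) = (⨅ y, F y) - C := by
  apply le_antisymm
  · have : (⨅ y, (F y - C)) + C ≤ ⨅ y, F y := by
      refine le_ciInf fun y => ?_
      have := ciInf_le (f := fun y => F y - C) ?_ y
      · linarith
      · obtain ⟨m, hm⟩ := hb
        exact ⟨m - C, by rintro z ⟨y, rfl⟩; have := hm ⟨y, rfl⟩; simp at this ⊢; linarith⟩
    linarith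
  · refine le_ciInf fun y => ?_
    have := ciInf_le hb y
    linarith

end Aux

private lemma moreau_arith (γ ρ s X Y P G : ℝ) (hγ : γ ≠ 0) (hs : s ≠ 0) (hsv : s = 1 - γ * ρ) :
    1 / (2 * γ) * (X - 2 * P + Y) + G
      = G + ρ / 2 * Y + s / (2 * γ) * (Y - 2 * (s⁻¹ * P) + s⁻¹ ^ 2 * X) - ρ / (2 * s) * X := by
  subst hsv
  field_simp
  ring

set_option maxHeartbeats 1000000

/-- For `g` ρ-weakly convex with `γρ < 1`, the Moreau envelope `g^γ`
is `ρ/(1 − γρ)`-weakly convex. -/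
theorem moreau_envelope_weakly_convex (d : ℕ) (hd : 1 ≤ d) (ρ γ : ℝ)
    (hρ : 0 < ρ) (hγ : 0 < γ) (hγρ : γ * ρ < 1)
    (g : EuclideanSpace ℝ (Fin d) → ℝ)
    (hweak : ConvexOn ℝ Set.univ (fun x => g x + ρ / 2 * ‖x‖ ^ 2)) :
    ConvexOn ℝ Set.univ
      (fun x : EuclideanSpace ℝ (Fin d) =>
        (⨅ y : EuclideanSpace ℝ (Fin d), 1 / (2 * γ) * ‖x - y‖ ^ 2 + g y)
          + ρ / (2 * (1 - γ * ρ)) * ‖x‖ ^ 2) := by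
  set h : EuclideanSpace ℝ (Fin d) → ℝ := fun y => g y + ρ / 2 * ‖y‖ ^ 2 with hh
  set s : ℝ := 1 - γ * ρ with hs_def
  have hs : 0 < s := by simp [hs_def]; linarith
  set c : ℝ := s / (2 * γ) with hc_def
  have hc : 0 < c := by positivity
  -- continuity of h
  have hcont : Continuous h := hweak.locallyLipschitz.continuous
  clear_value h s c
  -- max of h on the unit sphere
  have hsne : (Metric.sphere (0 : EuclideanSpace ℝ (Fin d)) 1).Nonempty := by
    refine ⟨EuclideanSpace.single ⟨0, hd⟩ (1 : ℝ), ?_⟩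
    rw [mem_sphere_zero_iff_norm, EuclideanSpace.norm_single]; norm_num
  obtain ⟨z₀, hz₀mem, hz₀⟩ :=
    (isCompact_sphere (0 : EuclideanSpace ℝ (Fin d)) 1).exists_isMaxOn hsne hcont.continuousOn
  set M : ℝ := h z₀ with hM
  set K : ℝ := max 0 (M - h 0) with hK_def
  have hK0 : 0 ≤ K := le_max_left _ _
  have hKM : M - h 0 ≤ K := le_max_right _ _
  clear_value M K
  -- affine-type lower bound for h
  have hlb : ∀ y : EuclideanSpace ℝ (Fin d), h 0 - K * ‖y‖ ≤ h y := by
    intro y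
    by_cases hy : y = 0
    · simp [hy]
    · set n : ℝ := ‖y‖ with hn_def
      have hn : 0 < n := norm_pos_iff.mpr hy
      set t : ℝ := (1 + n)⁻¹ with ht_def
      have h1n : (0:ℝ) < 1 + n := by linarith
      have ht : 0 < t := by positivity
      have ht1 : t ≤ 1 := by
        rw [ht_def, inv_le_one_iff₀]; right; linarith
      set z' : EuclideanSpace ℝ (Fin d) := (-n⁻¹) • y with hz'_def
      have hz'mem : z' ∈ Metric.sphere (0 : EuclideanSpace ℝ (Fin d)) 1 := by
        rw [mem_sphere_zero_iff_norm, hz'_def, norm_smul]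
        simp only [norm_neg, Real.norm_eq_abs, abs_of_nonneg (inv_nonneg.mpr hn.le)]
        field_simp
        exact hn_def.symm
      have hcoef : t + (1 - t) * -n⁻¹ = 0 := by
        rw [ht_def]
        field_simp
        ring
      have hzero : t • y + (1 - t) • z' = (0 : EuclideanSpace ℝ (Fin d)) := by
        rw [hz'_def, smul_smul, ← add_smul, hcoef, zero_smul]
      have hconv := hweak.2 (Set.mem_univ y) (Set.mem_univ z') ht.le
        (by linarith : (0:ℝ) ≤ 1 - t) (by ring)
      rw [hzero] at hconv
      have hz'M : h z' ≤ M := by rw [hM]; exact hz₀ hz'mem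
      have e1 : (1 + n) * t = 1 := by rw [ht_def]; field_simp
      have e2 : (1 + n) * (1 - t) = n := by rw [ht_def]; field_simp; ring
      have hmul := mul_le_mul_of_nonneg_left hconv h1n.le
      have hmain : (1 + n) * h 0 ≤ h y + n * h z' := by
        calc (1 + n) * h 0 ≤ (1 + n) * (t * h y + (1 - t) * h z') := hmul
          _ = ((1 + n) * t) * h y + ((1 + n) * (1 - t)) * h z' := by ring
          _ = h y + n * h z' := by rw [e1, e2]; ring
      nlinarith [hmain, hz'M, hK0, hKM, hn]
  -- the shifted objective
  set F : EuclideanSpace ℝ (Fin d) → EuclideanSpace ℝ (Fin d) → ℝ := fun u y => h y + c * ‖y - u‖ ^ 2 with hF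
  clear_value F
  have hFlb : ∀ u y : EuclideanSpace ℝ (Fin d), h 0 - K ^ 2 / c - c * ‖u‖ ^ 2 ≤ F u y := by
    intro u y
    have hq : ‖y‖ ≤ ‖y - u‖ + ‖u‖ := by
      calc ‖y‖ = ‖(y - u) + u‖ := by rw [sub_add_cancel]
        _ ≤ ‖y - u‖ + ‖u‖ := norm_add_le _ _
    have := hlb y
    have hscaled : K * ‖y‖ * c ≤ K ^ 2 + c ^ 2 * ‖u‖ ^ 2 + c ^ 2 * ‖y - u‖ ^ 2 := by
      nlinarith [sq_nonneg (K - c * ‖y - u‖), sq_nonneg (K - c * ‖u‖),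
        mul_le_mul_of_nonneg_left hq (mul_nonneg hc.le hK0),
        sq_nonneg (c * ‖y - u‖), sq_nonneg (c * ‖u‖)]
    have h5 : K * ‖y‖ ≤ K ^ 2 / c + c * ‖u‖ ^ 2 + c * ‖y - u‖ ^ 2 := by
      rw [← mul_le_mul_iff_of_pos_right hc, add_mul, add_mul, div_mul_cancel₀ _ hc.ne']
      nlinarith [hscaled]
    simp only [hF]
    nlinarith [this, h5]
  have hbdd : ∀ u : EuclideanSpace ℝ (Fin d), BddBelow (Set.range (F u)) := by
    intro u
    exact ⟨h 0 - K ^ 2 / c - c * ‖u‖ ^ 2, by rintro z ⟨y, rfl⟩; exact hFlb u y⟩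
  set G : EuclideanSpace ℝ (Fin d) → ℝ := fun u => ⨅ y, F u y with hG_def
  clear_value G
  -- pointwise identity
  have hptwise : ∀ (x y : EuclideanSpace ℝ (Fin d)),
      1 / (2 * γ) * ‖x - y‖ ^ 2 + g y = F (s⁻¹ • x) y - ρ / (2 * s) * ‖x‖ ^ 2 := by
    intro x y
    have e1 : ‖x - y‖ ^ 2 = ‖x‖ ^ 2 - 2 * ⟪x, y⟫ + ‖y‖ ^ 2 := norm_sub_sq_real x y
    have e2 : ‖y - s⁻¹ • x‖ ^ 2
        = ‖y‖ ^ 2 - 2 * (s⁻¹ * ⟪x, y⟫) + (s⁻¹) ^ 2 * ‖x‖ ^ 2 := by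
      rw [norm_sub_sq_real, real_inner_smul_right, real_inner_comm, norm_smul]
      simp only [Real.norm_eq_abs, abs_of_nonneg (inv_nonneg.mpr hs.le), mul_pow]
    simp only [hF, hh, hc_def]
    rw [e1, e2]
    linear_combination moreau_arith γ ρ s (‖x‖ ^ 2) (‖y‖ ^ 2) ⟪x, y⟫ (g y) hγ.ne' hs.ne' hs_def
  have hkey : ∀ x : EuclideanSpace ℝ (Fin d),
      (⨅ y : EuclideanSpace ℝ (Fin d), 1 / (2 * γ) * ‖x - y‖ ^ 2 + g y) + ρ / (2 * s) * ‖x‖ ^ 2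
        = G (s⁻¹ • x) := by
    intro x
    have : (⨅ y : EuclideanSpace ℝ (Fin d), 1 / (2 * γ) * ‖x - y‖ ^ 2 + g y)
        = (⨅ y, F (s⁻¹ • x) y) - ρ / (2 * s) * ‖x‖ ^ 2 := by
      rw [← iInf_sub_const (F (s⁻¹ • x)) (hbdd _) (ρ / (2 * s) * ‖x‖ ^ 2)]
      exact iInf_congr fun y => hptwise x y
    rw [this, sub_add_cancel, hG_def]
  -- convexity of G
  have hGconv : ∀ (u u' : EuclideanSpace ℝ (Fin d)) (a b : ℝ), 0 ≤ a → 0 ≤ b → a + b = 1 →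
      G (a • u + b • u') ≤ a * G u + b * G u' := by
    intro u u' a b ha hb hab
    refine le_of_forall_pos_le_add fun ε hε => ?_
    have hGu : ∀ v, G v = ⨅ y, F v y := fun v => by rw [hG_def]
    obtain ⟨y, hy⟩ : ∃ y, F u y < G u + ε / 2 := by
      refine exists_lt_of_ciInf_lt ?_
      rw [← hGu u]
      linarith
    obtain ⟨y', hy'⟩ : ∃ y', F u' y' < G u' + ε / 2 := by
      refine exists_lt_of_ciInf_lt ?_
      rw [← hGu u']
      linarith
    have h1 : G (a • u + b • u') ≤ F (a • u + b • u') (a • y + b • y') := by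
      rw [hGu]
      exact ciInf_le (hbdd _) _
    have h2 : h (a • y + b • y') ≤ a * h y + b * h y' :=
      hweak.2 (Set.mem_univ y) (Set.mem_univ y') ha hb hab
    have h3 : ‖(a • y + b • y') - (a • u + b • u')‖ ^ 2
        ≤ a * ‖y - u‖ ^ 2 + b * ‖y' - u'‖ ^ 2 := by
      have hv : (a • y + b • y') - (a • u + b • u') = a • (y - u) + b • (y' - u') := by
        simp only [smul_sub]
        abel
      rw [hv]
      exact norm_sq_combo_le a b ha hb hab _ _
    have h4 : F (a • u + b • u') (a • y + b • y') ≤ a * F u y + b * F u' y' := by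
      simp only [hF]
      have := mul_le_mul_of_nonneg_left h3 hc.le
      nlinarith [h2, this]
    have h5 : a * F u y ≤ a * (G u + ε / 2) := mul_le_mul_of_nonneg_left hy.le ha
    have h6 : b * F u' y' ≤ b * (G u' + ε / 2) := mul_le_mul_of_nonneg_left hy'.le hb
    nlinarith [h1, h4, h5, h6]
  -- assemble
  have heq : (fun x : EuclideanSpace ℝ (Fin d) =>
      (⨅ y : EuclideanSpace ℝ (Fin d), 1 / (2 * γ) * ‖x - y‖ ^ 2 + g y) + ρ / (2 * s) * ‖x‖ ^ 2)
      = fun x : EuclideanSpace ℝ (Fin d) => G (s⁻¹ • x) := funext hkey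
  rw [heq]
  refine ⟨convex_univ, fun x _ x' _ a b ha hb hab => ?_⟩
  have hsmul : s⁻¹ • (a • x + b • x') = a • (s⁻¹ • x) + b • (s⁻¹ • x') := by
    rw [smul_add, smul_comm s⁻¹ a, smul_comm s⁻¹ b]
  simp only [hsmul]
  exact hGconv _ _ a b ha hb hab
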